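/- Every primitive countably compact Hausdorff topological inverse semigroup S embeds as a dense topological inverse subsemigroup into a primitive compact Hausdorff topological inverse semigroup. -/

import Mathlib

set_option linter.unusedSectionVars false

open Topology Filter Uniformity

universe u

/-- A space is countably compact if every countable open cover has a finite
subcover. -/
def CountablyCompact (X : Type*) [TopologicalSpace X] : Prop :=
  ∀ U : ℕ → Set X, (∀ n, IsOpen (U n)) → (⋃ n, U n) = Set.univ →
    ∃ t : Finset ℕ, (⋃ n ∈ t, U n) = Set.univ

/-- `inv` is an inversion making the semigroup an inverse semigroup. -/
def InvSgrp {S : Type*} [Semigroup S] (inv : S → S) : Prop :=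
  (∀ x : S, x * inv x * x = x) ∧ (∀ x : S, inv x * x * inv x = inv x) ∧
    ∀ x y : S, x * y * x = x → y * x * y = y → y = inv x

namespace Stmt10

section Algebra

variable {S : Type u} [SemigroupWithZero S] (iv : S → S) (hinv : InvSgrp iv)

include hinv

theorem a1 (x : S) : x * iv x * x = x := hinv.1 x
theorem a2 (x : S) : iv x * x * iv x = iv x := hinv.2.1 x
theorem uniq {x y : S} (h1 : x * y * x = x) (h2 : y * x * y = y) : y = iv x :=
  hinv.2.2 x y h1 h2

theorem iv_iv (x : S) : iv (iv x) = x :=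
  (uniq iv hinv (a2 iv hinv x) (a1 iv hinv x)).symm

theorem iv_zero : iv (0 : S) = 0 :=
  (uniq iv hinv (by simp) (by simp)).symm

theorem iv_idem {e : S} (he : e * e = e) : iv e = e :=
  (uniq iv hinv (by rw [he, he]) (by rw [he, he])).symm

theorem row_idem (x : S) : (x * iv x) * (x * iv x) = x * iv x := by
  have := a1 iv hinv x
  calc (x * iv x) * (x * iv x) = (x * iv x * x) * iv x := by simp [mul_assoc]
  _ = x * iv x := by rw [this]

theorem col_idem (x : S) : (iv x * x) * (iv x * x) = iv x * x := by
  have := a2 iv hinv x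
  calc (iv x * x) * (iv x * x) = (iv x * x * iv x) * x := by simp [mul_assoc]
  _ = iv x * x := by rw [this]

theorem row_ne_zero {x : S} (hx : x ≠ 0) : x * iv x ≠ 0 := fun h => by
  have := a1 iv hinv x; rw [h, zero_mul] at this; exact hx this.symm

theorem col_ne_zero {x : S} (hx : x ≠ 0) : iv x * x ≠ 0 := fun h => by
  have h2 := a2 iv hinv x
  have h1 := a1 iv hinv x
  rw [mul_assoc, h, mul_zero] at h1; exact hx h1.symm

theorem iv_ne_zero {x : S} (hx : x ≠ 0) : iv x ≠ 0 := fun h => by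
  have h1 := a1 iv hinv x
  rw [h, mul_zero, zero_mul] at h1
  exact hx h1.symm

/-- product of idempotents is idempotent (Vagner). -/
theorem idem_mul {e f : S} (he : e * e = e) (hf : f * f = f) :
    (e * f) * (e * f) = e * f := by
  set a := iv (e * f) with ha
  have h1 : (e * f) * a * (e * f) = e * f := a1 iv hinv (e * f)
  have h2 : a * (e * f) * a = a := a2 iv hinv (e * f)
  -- f * a * e is an inverse of e * f
  have k1 : (e * f) * (f * a * e) * (e * f) = e * f := by
    calc (e * f) * (f * a * e) * (e * f) = e * ((f * f) * a * (e * e)) * f := by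
          simp [mul_assoc]
    _ = e * (f * a * e) * f := by rw [hf, he]
    _ = (e * f) * a * (e * f) := by simp [mul_assoc]
    _ = e * f := h1
  have k2 : (f * a * e) * (e * f) * (f * a * e) = f * a * e := by
    calc (f * a * e) * (e * f) * (f * a * e)
        = f * (a * ((e * e) * (f * f)) * a) * e := by simp [mul_assoc]
    _ = f * (a * (e * f) * a) * e := by rw [he, hf]
    _ = f * a * e := by rw [h2]
  have hfa : f * a * e = a := by
    have := uniq iv hinv k1 k2; rw [← ha] at this; exact this
  have haa : a * a = a := by
    conv_lhs => rw [← hfa]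
    calc (f * a * e) * (f * a * e) = f * (a * (e * f) * a) * e := by simp [mul_assoc]
    _ = f * a * e := by rw [h2]
    _ = a := hfa
  -- e*f is an inverse of a, and a is its own inverse, so e*f = a
  have hef : e * f = a := by
    have h3 : a * (e * f) * a = a := h2
    have h4 : (e * f) * a * (e * f) = e * f := h1
    have : e * f = iv a := uniq iv hinv h3 h4
    rw [this, iv_idem iv hinv haa]
  rw [hef]; exact haa

theorem idem_comm {e f : S} (he : e * e = e) (hf : f * f = f) :
    e * f = f * e := by
  have hef := idem_mul iv hinv he hf
  have hfe := idem_mul iv hinv hf he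
  have k1 : (e * f) * (f * e) * (e * f) = e * f := by
    calc (e * f) * (f * e) * (e * f) = e * ((f * f) * (e * e)) * f := by simp [mul_assoc]
    _ = (e * f) * (e * f) := by rw [hf, he]; simp [mul_assoc]
    _ = e * f := hef
  have k2 : (f * e) * (e * f) * (f * e) = f * e := by
    calc (f * e) * (e * f) * (f * e) = f * ((e * e) * (f * f)) * e := by simp [mul_assoc]
    _ = (f * e) * (f * e) := by rw [he, hf]; simp [mul_assoc]
    _ = f * e := hfe
  have : f * e = iv (e * f) := uniq iv hinv k1 k2
  rw [this, iv_idem iv hinv hef]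

theorem iv_mul (x y : S) : iv (x * y) = iv y * iv x := by
  have hcomm : (y * iv y) * (iv x * x) = (iv x * x) * (y * iv y) :=
    idem_comm iv hinv (row_idem iv hinv y) (col_idem iv hinv x)
  have k1 : (x * y) * (iv y * iv x) * (x * y) = x * y := by
    calc (x * y) * (iv y * iv x) * (x * y)
        = x * ((y * iv y) * (iv x * x)) * y := by simp [mul_assoc]
    _ = x * ((iv x * x) * (y * iv y)) * y := by rw [hcomm]
    _ = (x * iv x * x) * (y * iv y * y) := by simp [mul_assoc]
    _ = x * y := by rw [a1 iv hinv x, a1 iv hinv y]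
  have k2 : (iv y * iv x) * (x * y) * (iv y * iv x) = iv y * iv x := by
    calc (iv y * iv x) * (x * y) * (iv y * iv x)
        = iv y * ((iv x * x) * (y * iv y)) * iv x := by simp [mul_assoc]
    _ = iv y * ((y * iv y) * (iv x * x)) * iv x := by rw [hcomm]
    _ = (iv y * y * iv y) * (iv x * x * iv x) := by simp [mul_assoc]
    _ = iv y * iv x := by rw [a2 iv hinv x, a2 iv hinv y]
  exact (uniq iv hinv k1 k2).symm

end Algebra


section Prim

variable {S : Type u} [SemigroupWithZero S] (iv : S → S) (hinv : InvSgrp iv)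
variable (hprim : ∀ e : S, e ≠ 0 → e * e = e →
      ∀ f : S, f ≠ 0 → f * f = f → e * f = f → f * e = f → f = e)

include hinv hprim

/-- distinct nonzero idempotents are orthogonal -/
theorem orth {e f : S} (he0 : e ≠ 0) (he : e * e = e) (hf0 : f ≠ 0)
    (hf : f * f = f) (hne : e ≠ f) : e * f = 0 := by
  by_contra h
  have hef : (e * f) * (e * f) = e * f := idem_mul iv hinv he hf
  have hcomm := idem_comm iv hinv he hf
  have h1 : e * (e * f) = e * f := by rw [← mul_assoc, he]
  have h2 : (e * f) * e = e * f := by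
    rw [mul_assoc, ← hcomm, ← mul_assoc, he]
  have he' : e * f = e := hprim e he0 he (e * f) h hef h1 h2
  have h3 : f * (e * f) = e * f := by
    calc f * (e * f) = (f * e) * f := by rw [mul_assoc]
    _ = (e * f) * f := by rw [← hcomm]
    _ = e * (f * f) := by rw [mul_assoc]
    _ = e * f := by rw [hf]
  have h4 : (e * f) * f = e * f := by rw [mul_assoc, hf]
  have hf' : e * f = f := hprim f hf0 hf (e * f) h hef h3 h4
  exact hne (he'.symm.trans hf')

theorem mul_ne_zero_iff' {x y : S} (hx : x ≠ 0) (hy : y ≠ 0) :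
    x * y ≠ 0 ↔ iv x * x = y * iv y := by
  constructor
  · intro h
    by_contra hne
    have := orth iv hinv hprim (col_ne_zero iv hinv hx) (col_idem iv hinv x)
      (row_ne_zero iv hinv hy) (row_idem iv hinv y) hne
    apply h
    calc x * y = (x * iv x * x) * (y * iv y * y) := by
          rw [a1 iv hinv x, a1 iv hinv y]
    _ = x * ((iv x * x) * (y * iv y)) * y := by simp [mul_assoc]
    _ = x * 0 * y := by rw [this]
    _ = 0 := by simp
  · intro h hxy
    have : (x * y) * (iv y * iv x) = x * iv x := by
      calc (x * y) * (iv y * iv x) = x * ((y * iv y) * iv x) := by simp [mul_assoc]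
      _ = x * ((iv x * x) * iv x) := by rw [← h]
      _ = x * iv x := by rw [a2 iv hinv x]
    rw [hxy, zero_mul] at this
    exact row_ne_zero iv hinv hx this.symm

theorem row_mul {x y : S} (h : x * y ≠ 0) : (x * y) * iv (x * y) = x * iv x := by
  have hx : x ≠ 0 := fun hh => h (by rw [hh, zero_mul])
  have hy : y ≠ 0 := fun hh => h (by rw [hh, mul_zero])
  set f := (x * y) * iv (x * y) with hfdef
  have hf0 : f ≠ 0 := row_ne_zero iv hinv h
  have hff : f * f = f := row_idem iv hinv (x * y)
  have he0 : x * iv x ≠ 0 := row_ne_zero iv hinv hx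
  have hee : (x * iv x) * (x * iv x) = x * iv x := row_idem iv hinv x
  have hiv : iv (x * y) = iv y * iv x := iv_mul iv hinv x y
  have h1 : (x * iv x) * f = f := by
    rw [hfdef, hiv]
    calc (x * iv x) * ((x * y) * (iv y * iv x))
        = ((x * iv x * x) * y) * (iv y * iv x) := by simp [mul_assoc]
    _ = (x * y) * (iv y * iv x) := by rw [a1 iv hinv x]
  have h2 : f * (x * iv x) = f := by
    rw [hfdef, hiv]
    calc ((x * y) * (iv y * iv x)) * (x * iv x)
        = (x * y) * iv y * (iv x * x * iv x) := by simp [mul_assoc]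
    _ = (x * y) * iv y * iv x := by rw [a2 iv hinv x]
    _ = (x * y) * (iv y * iv x) := by simp [mul_assoc]
  exact hprim (x * iv x) he0 hee f hf0 hff h1 h2

theorem col_mul {x y : S} (h : x * y ≠ 0) : iv (x * y) * (x * y) = iv y * y := by
  have hx : x ≠ 0 := fun hh => h (by rw [hh, zero_mul])
  have hy : y ≠ 0 := fun hh => h (by rw [hh, mul_zero])
  set f := iv (x * y) * (x * y) with hfdef
  have hf0 : f ≠ 0 := col_ne_zero iv hinv h
  have hff : f * f = f := col_idem iv hinv (x * y)
  have he0 : iv y * y ≠ 0 := col_ne_zero iv hinv hy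
  have hee : (iv y * y) * (iv y * y) = iv y * y := col_idem iv hinv y
  have hiv : iv (x * y) = iv y * iv x := iv_mul iv hinv x y
  have h1 : (iv y * y) * f = f := by
    rw [hfdef, hiv]
    calc (iv y * y) * ((iv y * iv x) * (x * y))
        = (iv y * y * iv y) * (iv x * (x * y)) := by simp [mul_assoc]
    _ = iv y * (iv x * (x * y)) := by rw [a2 iv hinv y]
    _ = (iv y * iv x) * (x * y) := by simp [mul_assoc]
  have h2 : f * (iv y * y) = f := by
    rw [hfdef, hiv]
    calc ((iv y * iv x) * (x * y)) * (iv y * y)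
        = (iv y * iv x) * x * (y * iv y * y) := by simp [mul_assoc]
    _ = (iv y * iv x) * x * y := by rw [a1 iv hinv y]
    _ = (iv y * iv x) * (x * y) := by simp [mul_assoc]
  exact hprim (iv y * y) he0 hee f hf0 hff h1 h2

omit hinv hprim

/-- Green's D-relation on (nonzero) idempotents, via a connecting element. -/
def Drel (e f : S) : Prop := ∃ z : S, z ≠ 0 ∧ z * iv z = e ∧ iv z * z = f

/-- The (α, β) cell: elements with given row and column idempotents. -/
def cell (α β : S) : Set S := {y | y * iv y = α ∧ iv y * y = β}

include hinv

theorem Drel.ne_zero {e f : S} (h : Drel iv e f) :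
    e ≠ 0 ∧ e * e = e ∧ f ≠ 0 ∧ f * f = f := by
  obtain ⟨z, hz, hre, hce⟩ := h
  exact ⟨hre ▸ row_ne_zero iv hinv hz, hre ▸ row_idem iv hinv z,
    hce ▸ col_ne_zero iv hinv hz, hce ▸ col_idem iv hinv z⟩

theorem Drel.refl {e : S} (he0 : e ≠ 0) (he : e * e = e) : Drel iv e e :=
  ⟨e, he0, by rw [iv_idem iv hinv he, he], by rw [iv_idem iv hinv he, he]⟩

theorem Drel.symm' {e f : S} (h : Drel iv e f) : Drel iv f e := by
  obtain ⟨z, hz, hre, hce⟩ := h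
  exact ⟨iv z, iv_ne_zero iv hinv hz, by rw [iv_iv iv hinv]; exact hce,
    by rw [iv_iv iv hinv]; exact hre⟩

include hprim

theorem Drel.trans' {e f g : S} (h1 : Drel iv e f) (h2 : Drel iv f g) :
    Drel iv e g := by
  obtain ⟨z, hz, hre, hce⟩ := h1
  obtain ⟨w, hw, hrw, hcw⟩ := h2
  have hzw : z * w ≠ 0 := by
    rw [mul_ne_zero_iff' iv hinv hprim hz hw, hce, hrw]
  exact ⟨z * w, hzw, by rw [row_mul iv hinv hprim hzw, hre],
    by rw [col_mul iv hinv hprim hzw, hcw]⟩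

omit hprim

theorem cell_mem_ne_zero {α β : S} (hα : α ≠ 0) {y : S} (hy : y ∈ cell iv α β) :
    y ≠ 0 := by
  rintro rfl
  rw [cell, Set.mem_setOf_eq, iv_zero iv hinv, mul_zero] at hy
  exact hα hy.1.symm

theorem cell_self {e : S} (he : e * e = e) : e ∈ cell iv e e := by
  constructor <;> rw [iv_idem iv hinv he, he]

theorem cell_left_unit {α β : S} {y : S} (hy : y ∈ cell iv α β) : α * y = y := by
  rw [← hy.1, mul_assoc]
  calc y * (iv y * y) = y * iv y * y := by rw [mul_assoc]
  _ = y := a1 iv hinv y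

theorem cell_right_unit {α β : S} {y : S} (hy : y ∈ cell iv α β) : y * β = y := by
  rw [← hy.2, ← mul_assoc]
  exact a1 iv hinv y

theorem cell_iv {α β : S} {y : S} (hy : y ∈ cell iv α β) : iv y ∈ cell iv β α := by
  constructor
  · rw [iv_iv iv hinv]; exact hy.2
  · rw [iv_iv iv hinv]; exact hy.1

theorem cell_reconstruct {α β : S} (hα : α ≠ 0) {y y' : S} (hy : y ∈ cell iv α β)
    (hy' : y' ∈ cell iv α β) : y * (iv y * y') = y' := by
  calc y * (iv y * y') = (y * iv y) * y' := by rw [mul_assoc]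
  _ = (y' * iv y') * y' := by rw [hy.1, hy'.1]
  _ = y' := a1 iv hinv y'

include hprim

theorem cell_mul {α β γ : S} (hα : α ≠ 0) (hβ : β ≠ 0) {y z : S}
    (hy : y ∈ cell iv α β) (hz : z ∈ cell iv β γ) : y * z ∈ cell iv α γ ∧ y * z ≠ 0 := by
  have hy0 : y ≠ 0 := cell_mem_ne_zero iv hinv hα hy
  have hz0 : z ≠ 0 := cell_mem_ne_zero iv hinv hβ hz
  have hyz : y * z ≠ 0 := by
    rw [mul_ne_zero_iff' iv hinv hprim hy0 hz0, hy.2, hz.1]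
  exact ⟨⟨by rw [row_mul iv hinv hprim hyz, hy.1],
    by rw [col_mul iv hinv hprim hyz, hz.2]⟩, hyz⟩

theorem cell_cross_zero {α β γ δ : S} (hα : α ≠ 0) (hγ : γ ≠ 0) {y z : S}
    (hy : y ∈ cell iv α β) (hz : z ∈ cell iv γ δ) (hne : β ≠ γ) : y * z = 0 := by
  have hy0 : y ≠ 0 := cell_mem_ne_zero iv hinv hα hy
  have hz0 : z ≠ 0 := cell_mem_ne_zero iv hinv hγ hz
  by_contra h
  have h2 := (mul_ne_zero_iff' iv hinv hprim hy0 hz0).mp h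
  rw [hy.2, hz.1] at h2
  exact hne h2

/-- the "g coordinate" of two elements in the same cell lies in the group cell. -/
theorem cell_g {α β : S} (hα : α ≠ 0) (hβ : β ≠ 0) {y y' : S} (hy : y ∈ cell iv α β)
    (hy' : y' ∈ cell iv α β) : iv y * y' ∈ cell iv β β := by
  have := cell_mul iv hinv hprim hβ hα (cell_iv iv hinv hy) hy'
  exact this.1

end Prim


section Topo

variable {S : Type u} [SemigroupWithZero S] [TopologicalSpace S] [T2Space S]
  [ContinuousMul S] (iv : S → S) (hinvc : Continuous iv) (hinv : InvSgrp iv)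
  (hprim : ∀ e : S, e ≠ 0 → e * e = e →
      ∀ f : S, f ≠ 0 → f * f = f → e * f = f → f * e = f → f = e)
  (hcc : CountablyCompact S)

/-- In a countably compact space, every injective sequence has an ω-accumulation
point. -/
theorem exists_acc (hcc : CountablyCompact S) (a : ℕ → S) (ha : Function.Injective a) :
    ∃ w : S, ∀ U : Set S, IsOpen U → w ∈ U → {n | a n ∈ U}.Infinite := by
  by_contra hno
  push_neg at hno
  have hfin : ∀ w : S, ∃ U : Set S, IsOpen U ∧ w ∈ U ∧ {n | a n ∈ U}.Finite := by
    intro w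
    obtain ⟨U, hU, hwU, hUfin⟩ := hno w
    exact ⟨U, hU, hwU, hUfin⟩
  -- every subset of the range is closed
  have hcl : ∀ B : Set S, B ⊆ Set.range a → IsClosed B := by
    intro B hB
    rw [← closure_subset_iff_isClosed]
    intro x hx
    by_contra hxB
    obtain ⟨U, hU, hxU, hUfin⟩ := hfin x
    have hVcl : IsClosed (a '' {n | a n ∈ U} \ {x}) :=
      ((hUfin.image a).subset Set.diff_subset).isClosed
    have hV : IsOpen (U \ (a '' {n | a n ∈ U} \ {x})) := hU.sdiff hVcl
    have hxV : x ∈ U \ (a '' {n | a n ∈ U} \ {x}) := ⟨hxU, fun h => h.2 rfl⟩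
    obtain ⟨b, hbV, hbB⟩ := mem_closure_iff.mp hx _ hV hxV
    obtain ⟨n, rfl⟩ := hB hbB
    exact hxB (by
      have : a n ∈ a '' {n | a n ∈ U} := ⟨n, hbV.1, rfl⟩
      have := hbV.2
      simp only [Set.mem_diff, Set.mem_singleton_iff, not_and, not_not] at this
      exact this ‹a n ∈ a '' {n | a n ∈ U}› ▸ hbB)
  -- build a countable cover with no finite subcover
  set U : ℕ → Set S := fun k => Nat.rec (Set.range a)ᶜ (fun n _ => (Set.range a \ {a n})ᶜ) k
    with hU
  have hUopen : ∀ k, IsOpen (U k) := by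
    intro k
    cases k with
    | zero => exact (hcl _ le_rfl.subset).isOpen_compl
    | succ n => exact (hcl _ Set.diff_subset).isOpen_compl
  have hUcov : (⋃ k, U k) = Set.univ := by
    ext x
    simp only [Set.mem_iUnion, Set.mem_univ, iff_true]
    by_cases hx : x ∈ Set.range a
    · obtain ⟨n, rfl⟩ := hx
      exact ⟨n + 1, fun h => h.2 rfl⟩
    · exact ⟨0, hx⟩
  obtain ⟨t, ht⟩ := hcc U hUopen hUcov
  have : a (t.sup id) ∈ ⋃ k ∈ t, U k := ht ▸ Set.mem_univ _
  obtain ⟨k, hk, hak⟩ := Set.mem_iUnion₂.mp this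
  cases k with
  | zero => exact hak ⟨t.sup id, rfl⟩
  | succ n =>
    have hne : a (t.sup id) = a n := by
      by_contra h
      exact hak ⟨⟨t.sup id, rfl⟩, h⟩
    have : t.sup id = n := ha hne
    subst this
    have : (t.sup id) + 1 ≤ t.sup id := Finset.le_sup (f := id) hk
    omega

theorem acc_mem_closure {a : ℕ → S} {w : S}
    (hw : ∀ U : Set S, IsOpen U → w ∈ U → {n | a n ∈ U}.Infinite) :
    w ∈ closure (Set.range a) :=
  mem_closure_iff.mpr fun U hU hwU =>
    let ⟨n, hn⟩ := (hw U hU hwU).nonempty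
    ⟨a n, hn, n, rfl⟩

theorem two_lt {P : ℕ → Prop} (h : {n | P n}.Infinite) :
    ∃ i j : ℕ, i < j ∧ P i ∧ P j := by
  obtain ⟨i, hi, j, hj, hne⟩ := h.nontrivial
  rcases lt_or_gt_of_ne hne with h' | h'
  · exact ⟨i, j, h', hi, hj⟩
  · exact ⟨j, i, h', hj, hi⟩

theorem pair_cont {F : S × S → S} (hF : Continuous F) {w : S} {O : Set S}
    (hO : IsOpen O) (hFO : F (w, w) ∈ O) :
    ∃ U : Set S, IsOpen U ∧ w ∈ U ∧ ∀ u ∈ U, ∀ v ∈ U, F (u, v) ∈ O := by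
  have hpre : IsOpen (F ⁻¹' O) := hO.preimage hF
  rw [isOpen_prod_iff] at hpre
  obtain ⟨U, V, hU, hV, hwU, hwV, hUV⟩ := hpre w w hFO
  exact ⟨U ∩ V, hU.inter hV, ⟨hwU, hwV⟩,
    fun u hu v hv => hUV (Set.mk_mem_prod hu.1 hv.2)⟩

include hinvc hinv hprim hcc

/-- D-classes of idempotents are finite. -/
theorem Dfin (e : S) : {f | Drel iv e f}.Finite := by
  by_contra hfin'
  have hfin : {f | Drel iv e f}.Infinite := hfin'
  have hne : e ≠ 0 := by
    obtain ⟨f, hf⟩ := hfin.nonempty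
    exact ((Drel.ne_zero iv hinv hf)).1
  obtain emb := hfin.natEmbedding
  have hex : ∀ n : ℕ, ∃ z : S, z ≠ 0 ∧ z * iv z = e ∧ iv z * z = (emb n : S) :=
    fun n => (emb n).2
  choose z hz0 hzr hzc using hex
  have hzinj : Function.Injective z := by
    intro n m hnm
    have : (emb n : S) = emb m := by rw [← hzc n, ← hzc m, hnm]
    exact emb.injective (Subtype.ext this)
  obtain ⟨w, hw⟩ := exists_acc hcc z hzinj
  -- every open set containing w * iv w contains 0
  have hc0 : ∀ O : Set S, IsOpen O → w * iv w ∈ O → (0 : S) ∈ O := by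
    intro O hO hwO
    have hF : Continuous fun p : S × S => p.1 * iv p.2 :=
      continuous_fst.mul (hinvc.comp continuous_snd)
    obtain ⟨U, hU, hwU, hval⟩ := pair_cont hF hO hwO
    obtain ⟨i, j, hij, hi, hj⟩ := two_lt (hw U hU hwU)
    have : z i * iv (z j) = 0 := by
      by_contra hzz
      have := (mul_ne_zero_iff' iv hinv hprim (hz0 i) (iv_ne_zero iv hinv (hz0 j))).mp hzz
      rw [hzc i, iv_iv iv hinv, hzc j] at this
      exact hij.ne (emb.injective (Subtype.ext this))
    exact this ▸ hval (z i) hi (z j) hj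
  -- every open set containing w * iv w contains e
  have hce : ∀ O : Set S, IsOpen O → w * iv w ∈ O → e ∈ O := by
    intro O hO hwO
    have hF : Continuous fun u : S => u * iv u := continuous_id.mul hinvc
    have hpre : IsOpen ((fun u : S => u * iv u) ⁻¹' O) := hO.preimage hF
    obtain ⟨n, hn⟩ := (hw _ hpre (by simpa using hwO)).nonempty
    have : z n * iv (z n) = e := hzr n
    exact this ▸ hn
  have hwiv : w * iv w = 0 := by
    by_contra h
    exact h (by simpa using hc0 {0}ᶜ isOpen_compl_singleton h)
  have : e = 0 := by
    have h0e : (0 : S) ∈ closure {e} := mem_closure_iff.mpr fun O hO h0O => by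
      have : e ∈ O := hce O hO (hwiv ▸ h0O)
      exact ⟨e, this, rfl⟩
    rw [closure_singleton] at h0e
    exact h0e.symm ▸ rfl
  exact hne this

omit hcc hprim in
theorem cell_open_aux : True := trivial

omit hcc hprim

theorem cell_open {α β x : S} (hx0 : x ≠ 0) (hx : x ∈ cell iv α β)
    (hprim : ∀ e : S, e ≠ 0 → e * e = e →
      ∀ f : S, f ≠ 0 → f * f = f → e * f = f → f * e = f → f = e) :
    IsOpen (cell iv α β) := by
  have hα : α ≠ 0 := hx.1 ▸ row_ne_zero iv hinv hx0
  have hβ : β ≠ 0 := hx.2 ▸ col_ne_zero iv hinv hx0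
  have key : cell iv α β = {y | iv x * y ≠ 0} ∩ {y | y * iv x ≠ 0} := by
    ext y
    constructor
    · intro hy
      have hy0 : y ≠ 0 := cell_mem_ne_zero iv hinv hα hy
      constructor
      · rw [Set.mem_setOf_eq, mul_ne_zero_iff' iv hinv hprim (iv_ne_zero iv hinv hx0) hy0,
          iv_iv iv hinv, hx.1, hy.1]
      · rw [Set.mem_setOf_eq, mul_ne_zero_iff' iv hinv hprim hy0 (iv_ne_zero iv hinv hx0),
          iv_iv iv hinv, hx.2, hy.2]
    · rintro ⟨h1, h2⟩
      have hy0 : y ≠ 0 := by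
        rintro rfl; exact h1 (mul_zero _)
      have e1 := (mul_ne_zero_iff' iv hinv hprim (iv_ne_zero iv hinv hx0) hy0).mp h1
      have e2 := (mul_ne_zero_iff' iv hinv hprim hy0 (iv_ne_zero iv hinv hx0)).mp h2
      rw [iv_iv iv hinv, hx.1] at e1
      rw [iv_iv iv hinv, hx.2] at e2
      exact ⟨e1.symm, e2⟩
  rw [key]
  exact ((isOpen_compl_singleton.preimage (continuous_const.mul continuous_id)).inter
    (isOpen_compl_singleton.preimage (continuous_id.mul continuous_const)))

theorem cell_closed (α β : S) : IsClosed (cell iv α β) := by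
  have : cell iv α β = (fun y : S => (y * iv y, iv y * y)) ⁻¹' {(α, β)} := by
    ext y
    simp only [cell, Set.mem_setOf_eq, Set.mem_preimage, Set.mem_singleton_iff, Prod.mk.injEq]
  rw [this]
  exact isClosed_singleton.preimage ((continuous_id.mul hinvc).prodMk (hinvc.mul continuous_id))

include hprim hcc

/-- Total boundedness of cells. -/
theorem cell_TB {α β : S} (hα : α ≠ 0) (hβ0 : β ≠ 0) {O : Set S} (hO : IsOpen O)
    (hβO : β ∈ O) :
    ∃ t : Finset S, ↑t ⊆ cell iv α β ∧ ∀ y ∈ cell iv α β, ∃ h ∈ t, iv h * y ∈ O := by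
  classical
  by_contra hno
  push_neg at hno
  have hch : ∀ t : Finset S, ∃ y,
      (↑t ⊆ cell iv α β → (y ∈ cell iv α β ∧ ∀ h ∈ t, iv h * y ∉ O)) := by
    intro t
    by_cases ht : ↑t ⊆ cell iv α β
    · obtain ⟨y, hy1, hy2⟩ := hno t ht
      exact ⟨y, fun _ => ⟨hy1, hy2⟩⟩
    · exact ⟨0, fun h => absurd h ht⟩
  choose Y hY using hch
  set p : ℕ → Finset S := fun n => Nat.rec ∅ (fun _ q => insert (Y q) q) n with hp
  have hpsucc : ∀ n, p (n + 1) = insert (Y (p n)) (p n) := fun n => rfl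
  have hsub : ∀ n, ↑(p n) ⊆ cell iv α β := by
    intro n
    induction n with
    | zero => simp [hp]
    | succ k ih =>
      rw [hpsucc k]
      intro x hx
      rcases Finset.mem_insert.mp hx with h | h
      · exact h ▸ (hY (p k) ih).1
      · exact ih h
  have hprop : ∀ n, Y (p n) ∈ cell iv α β ∧ ∀ h ∈ p n, iv h * Y (p n) ∉ O :=
    fun n => hY (p n) (hsub n)
  have hmono : ∀ m n : ℕ, m ≤ n → p m ⊆ p n := by
    intro m n hmn
    induction n with
    | zero => simp_all
    | succ k ih =>
      rcases Nat.lt_or_ge m (k+1) with h | h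
      · exact (ih (Nat.lt_succ_iff.mp h)).trans (by rw [hpsucc]; exact Finset.subset_insert _ _)
      · have : m = k + 1 := le_antisymm hmn h
        subst this; rfl
  have hmem : ∀ m n : ℕ, m < n → Y (p m) ∈ p n := by
    intro m n hmn
    apply hmono (m+1) n hmn
    rw [hpsucc]; exact Finset.mem_insert_self _ _
  have hlt : ∀ i j : ℕ, i < j → Y (p i) ≠ Y (p j) := by
    intro i j hij heq
    have h1 : iv (Y (p i)) * Y (p j) ∉ O := (hprop j).2 _ (hmem i j hij)
    rw [heq] at h1
    have : iv (Y (p j)) * Y (p j) = β := (hprop j).1.2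
    rw [this] at h1
    exact h1 hβO
  have hinj : Function.Injective fun n => Y (p n) := by
    intro i j hij
    by_contra hne
    rcases lt_or_gt_of_ne hne with h | h
    · exact hlt i j h hij
    · exact hlt j i h hij.symm
  obtain ⟨w, hw⟩ := exists_acc hcc _ hinj
  have hwc : w ∈ cell iv α β := by
    have h1 := acc_mem_closure hw
    have h2 : Set.range (fun n => Y (p n)) ⊆ cell iv α β := by
      rintro _ ⟨n, rfl⟩; exact (hprop n).1
    exact closure_minimal h2 (cell_closed iv hinvc hinv α β) h1
  have hF : Continuous fun q : S × S => iv q.1 * q.2 :=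
    (hinvc.comp continuous_fst).mul continuous_snd
  have hval : iv w * w ∈ O := hwc.2 ▸ hβO
  obtain ⟨U, hU, hwU, hprod⟩ := pair_cont hF hO hval
  obtain ⟨i, j, hij, hi, hj⟩ := two_lt (hw U hU hwU)
  exact (hprop j).2 _ (hmem i j hij) (hprod _ hi _ hj)

omit hprim hcc

theorem mulO {β : S} (hβ : β * β = β) {O : Set S} (hO : IsOpen O) (hβO : β ∈ O) :
    ∃ O' : Set S, IsOpen O' ∧ β ∈ O' ∧ O' ⊆ O ∧ ∀ g ∈ O', ∀ h ∈ O', g * h ∈ O := by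
  have hF : Continuous fun q : S × S => q.1 * q.2 := continuous_mul
  have hval : (fun q : S × S => q.1 * q.2) (β, β) ∈ O := by simpa [hβ] using hβO
  obtain ⟨U, hU, hwU, hprod⟩ := pair_cont hF hO hval
  exact ⟨U ∩ O, hU.inter hO, ⟨hwU, hβO⟩, Set.inter_subset_right,
    fun g hg h hh => hprod g hg.1 h hh.1⟩

theorem tripO {γ : S} (hγ : γ * γ = γ) {O : Set S} (hO : IsOpen O) (hγO : γ ∈ O) :
    ∃ O₀ : Set S, IsOpen O₀ ∧ γ ∈ O₀ ∧ ∀ h k : S, h ∈ O₀ → k ∈ O₀ →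
      iv h * (k * h) ∈ O := by
  have hF : Continuous fun q : S × S => iv q.1 * (q.2 * q.1) :=
    (hinvc.comp continuous_fst).mul (continuous_snd.mul continuous_fst)
  have hval : (fun q : S × S => iv q.1 * (q.2 * q.1)) (γ, γ) ∈ O := by
    simp only [iv_idem iv hinv hγ, hγ]
    simpa [hγ] using hγO
  obtain ⟨U, hU, hwU, hprod⟩ := pair_cont hF hO hval
  exact ⟨U, hU, hwU, fun h k hh hk => hprod h hh k hk⟩

include hprim hcc

/-- uniform conjugation control (SIN-type lemma). -/
theorem conjO {β γ : S} (hβ0 : β ≠ 0) (hβ : β * β = β) (hγ0 : γ ≠ 0) (hγ : γ * γ = γ)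
    {O : Set S} (hO : IsOpen O) (hγO : γ ∈ O) :
    ∃ O' : Set S, IsOpen O' ∧ β ∈ O' ∧
      ∀ z ∈ cell iv β γ, ∀ g ∈ O', iv z * (g * z) ∈ O := by
  classical
  obtain ⟨O₀, hO₀, hγO₀, hT⟩ := tripO iv hinvc hinv hγ hO hγO
  obtain ⟨t, htc, htcov⟩ := cell_TB iv hinvc hinv hprim hcc hβ0 hγ0 hO₀ hγO₀
  have hpt : ∀ zi ∈ t, ∃ Oi : Set S, IsOpen Oi ∧ β ∈ Oi ∧
      ∀ g ∈ Oi, iv zi * (g * zi) ∈ O₀ := by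
    intro zi hzi
    have hzic : zi ∈ cell iv β γ := htc hzi
    have hcont : Continuous fun g : S => iv zi * (g * zi) :=
      continuous_const.mul (continuous_id.mul continuous_const)
    have hval : iv zi * (β * zi) ∈ O₀ := by
      rw [cell_left_unit iv hinv hzic, hzic.2]; exact hγO₀
    exact ⟨_, hO₀.preimage hcont, hval, fun g hg => hg⟩
  choose! Oi hOi using hpt
  refine ⟨⋂ zi ∈ t, Oi zi, isOpen_biInter_finset (fun zi hzi => (hOi zi hzi).1),
    Set.mem_iInter₂.mpr (fun zi hzi => (hOi zi hzi).2.1), ?_⟩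
  intro z hz g hg
  obtain ⟨zi, hzi, hcov⟩ := htcov z hz
  have hzic : zi ∈ cell iv β γ := htc hzi
  set h := iv zi * z with hh
  have hk : iv zi * (g * zi) ∈ O₀ := (hOi zi hzi).2.2 g (Set.mem_iInter₂.mp hg zi hzi)
  have hz' : zi * h = z := cell_reconstruct iv hinv hβ0 hzic hz
  have heq : iv z * (g * z) = iv h * ((iv zi * (g * zi)) * h) := by
    calc iv z * (g * z) = iv (zi * h) * (g * (zi * h)) := by rw [hz']
    _ = (iv h * iv zi) * (g * (zi * h)) := by rw [iv_mul iv hinv]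
    _ = iv h * ((iv zi * (g * zi)) * h) := by simp [mul_assoc]
  rw [heq]
  exact hT h _ hcov hk

omit hcc

/-- A finite D-closed set of nonzero idempotents. -/
def DCl (A : Finset S) : Prop :=
  (∀ e ∈ A, e ≠ 0 ∧ e * e = e) ∧ ∀ e ∈ A, ∀ f, Drel iv e f → f ∈ A

/-- The "blob": everything whose component misses `A` (plus `0`). -/
def Blob (A : Finset S) : Set S := {y | iv y * y ∉ (A : Set S)}

theorem blob_open (A : Finset S) : IsOpen (Blob iv A) := by
  have : Blob iv A = (fun y : S => iv y * y) ⁻¹' (↑A : Set S)ᶜ := rfl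
  rw [this]
  exact (A.finite_toSet.isClosed.isOpen_compl).preimage (hinvc.mul continuous_id)

theorem zero_mem_blob {A : Finset S} (hA : DCl iv A) : (0 : S) ∈ Blob iv A := by
  intro h0
  rw [iv_zero iv hinv, mul_zero] at h0
  exact (hA.1 0 h0).1 rfl

theorem blob_iv {A : Finset S} (hA : DCl iv A) {y : S} (hy : y ∈ Blob iv A) :
    iv y ∈ Blob iv A := by
  intro h
  rw [iv_iv iv hinv] at h
  by_cases hy0 : y = 0
  · subst hy0
    rw [zero_mul] at h
    exact (hA.1 0 h).1 rfl
  · exact hy (hA.2 _ h _ ⟨y, hy0, rfl, rfl⟩)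

theorem blob_mul_blob {A : Finset S} (hA : DCl iv A) {y z : S} (hy : y ∈ Blob iv A)
    (hz : z ∈ Blob iv A) : y * z ∈ Blob iv A := by
  by_cases h : y * z = 0
  · rw [Blob, Set.mem_setOf_eq, h, mul_zero]
    exact fun h0 => (hA.1 0 h0).1 rfl
  · have := col_mul iv hinv hprim h
    rw [Blob, Set.mem_setOf_eq, this]
    exact hz

theorem blob_mul_cell {A : Finset S} (hA : DCl iv A) {y z : S} (hy : y ∈ Blob iv A)
    (hz : iv z * z ∈ A) : y * z = 0 := by
  by_contra h
  have hz0 : z ≠ 0 := by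
    rintro rfl
    rw [iv_zero iv hinv, mul_zero] at hz
    exact (hA.1 0 hz).1 rfl
  have hy0 : y ≠ 0 := by rintro rfl; exact h (zero_mul _)
  have := (mul_ne_zero_iff' iv hinv hprim hy0 hz0).mp h
  have hrz : z * iv z ∈ A := hA.2 _ hz _ (Drel.symm' iv hinv ⟨z, hz0, rfl, rfl⟩)
  exact hy (this ▸ hrz)

theorem cell_mul_blob {A : Finset S} (hA : DCl iv A) {y z : S} (hy : iv y * y ∈ A)
    (hz : z ∈ Blob iv A) : y * z = 0 := by
  by_contra h
  have hy0 : y ≠ 0 := by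
    rintro rfl
    rw [iv_zero iv hinv, mul_zero] at hy
    exact (hA.1 0 hy).1 rfl
  have hz0 : z ≠ 0 := by rintro rfl; exact h (mul_zero _)
  have heq := (mul_ne_zero_iff' iv hinv hprim hy0 hz0).mp h
  have hrz : z * iv z ∈ A := heq ▸ hy
  exact hz (hA.2 _ hrz _ ⟨z, hz0, rfl, rfl⟩)

include hcc

/-- blobs form a neighborhood basis at `0`. -/
theorem blob_basis {N : Set S} (hN : IsOpen N) (h0 : (0 : S) ∈ N) :
    ∃ A : Finset S, DCl iv A ∧ Blob iv A ⊆ N := by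
  classical
  by_contra hno
  push_neg at hno
  have hch : ∀ A : Finset S, ∃ y, (DCl iv A → (y ∈ Blob iv A ∧ y ∉ N)) := by
    intro A
    by_cases hA : DCl iv A
    · obtain ⟨y, h1, h2⟩ := Set.not_subset.mp (hno A hA)
      exact ⟨y, fun _ => ⟨h1, h2⟩⟩
    · exact ⟨0, fun h => absurd h hA⟩
  choose Y hY using hch
  set Dst : S → Finset S := fun y =>
    (Dfin iv hinvc hinv hprim hcc (iv y * y)).toFinset with hDst
  have hDstmem : ∀ y f : S, f ∈ Dst y ↔ Drel iv (iv y * y) f := by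
    intro y f; rw [hDst]; exact Set.Finite.mem_toFinset _
  set p : ℕ → Finset S := fun n => Nat.rec ∅ (fun _ q => q ∪ Dst (Y q)) n with hp
  have hpsucc : ∀ n, p (n + 1) = p n ∪ Dst (Y (p n)) := fun n => rfl
  have hDCl : ∀ n, DCl iv (p n) := by
    intro n
    induction n with
    | zero => exact ⟨fun e he => absurd he (by simp [hp]), fun e he => absurd he (by simp [hp])⟩
    | succ k ih =>
      rw [hpsucc]
      constructor
      · intro e he
        rcases Finset.mem_union.mp he with h | h
        · exact ih.1 e h
        · have := (hDstmem _ e).mp h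
          have h2 := Drel.ne_zero iv hinv this
          exact ⟨h2.2.2.1, h2.2.2.2⟩
      · intro e he f hf
        rcases Finset.mem_union.mp he with h | h
        · exact Finset.mem_union_left _ (ih.2 e h f hf)
        · refine Finset.mem_union_right _ ((hDstmem _ f).mpr ?_)
          exact Drel.trans' iv hinv hprim ((hDstmem _ e).mp h) hf
  have hprop : ∀ n, Y (p n) ∈ Blob iv (p n) ∧ Y (p n) ∉ N :=
    fun n => hY (p n) (hDCl n)
  have hY0 : ∀ n, Y (p n) ≠ 0 := by
    intro n h
    exact (hprop n).2 (by rw [h]; exact h0)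
  have hcolmem : ∀ n, iv (Y (p n)) * Y (p n) ∈ p (n + 1) := by
    intro n
    rw [hpsucc]
    refine Finset.mem_union_right _ ((hDstmem _ _).mpr ?_)
    exact Drel.refl iv hinv (col_ne_zero iv hinv (hY0 n)) (col_idem iv hinv _)
  have hmono : ∀ m n : ℕ, m ≤ n → p m ⊆ p n := by
    intro m n hmn
    induction n with
    | zero => simp_all
    | succ k ih =>
      rcases Nat.lt_or_ge m (k+1) with h | h
      · exact (ih (Nat.lt_succ_iff.mp h)).trans (by rw [hpsucc]; exact Finset.subset_union_left)
      · have : m = k + 1 := le_antisymm hmn h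
        subst this; rfl
  have hcol : ∀ m n : ℕ, m < n → iv (Y (p m)) * Y (p m) ∈ p n :=
    fun m n hmn => hmono (m+1) n hmn (hcolmem m)
  have hlt : ∀ i j : ℕ, i < j → Y (p i) ≠ Y (p j) := by
    intro i j hij heq
    have h1 : iv (Y (p i)) * Y (p i) ∈ p j := hcol i j hij
    rw [heq] at h1
    exact (hprop j).1 h1
  have hinj : Function.Injective fun n => Y (p n) := by
    intro i j hij
    by_contra hne
    rcases lt_or_gt_of_ne hne with h | h
    · exact hlt i j h hij
    · exact hlt j i h hij.symm
  obtain ⟨w, hw⟩ := exists_acc hcc _ hinj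
  have hwN : w ∉ N := by
    have h1 := acc_mem_closure hw
    have h2 : Set.range (fun n => Y (p n)) ⊆ Nᶜ := by
      rintro _ ⟨n, rfl⟩; exact (hprop n).2
    exact closure_minimal h2 hN.isClosed_compl h1
  have hw0 : w ≠ 0 := fun h => hwN (h ▸ h0)
  have hF : Continuous fun q : S × S => q.1 * iv q.2 :=
    continuous_fst.mul (hinvc.comp continuous_snd)
  have hval : w * iv w ∈ ({0}ᶜ : Set S) := row_ne_zero iv hinv hw0
  obtain ⟨U, hU, hwU, hprod⟩ := pair_cont hF isOpen_compl_singleton hval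
  obtain ⟨i, j, hij, hi, hj⟩ := two_lt (hw U hU hwU)
  have hne : Y (p i) * iv (Y (p j)) ≠ 0 := hprod _ hi _ hj
  have := (mul_ne_zero_iff' iv hinv hprim (hY0 i) (iv_ne_zero iv hinv (hY0 j))).mp hne
  rw [iv_iv iv hinv] at this
  have h1 : iv (Y (p i)) * Y (p i) ∈ p j := hcol i j hij
  rw [this] at h1
  exact (hprop j).1 h1

end Topo


section Unif

variable {S : Type u} [SemigroupWithZero S] [TopologicalSpace S] [T2Space S]
  [ContinuousMul S] (iv : S → S) (hinvc : Continuous iv) (hinv : InvSgrp iv)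
  (hprim : ∀ e : S, e ≠ 0 → e * e = e →
      ∀ f : S, f ≠ 0 → f * f = f → e * f = f → f * e = f → f = e)
  (hcc : CountablyCompact S)

/-- The data indexing a basic entourage. -/
structure Datum (S : Type u) [SemigroupWithZero S] [TopologicalSpace S]
    (iv : S → S) : Type u where
  A : Finset S
  hA : DCl iv A
  O : S → Set S
  hO : ∀ β ∈ A, IsOpen (O β) ∧ β ∈ O β

instance : Nonempty (Datum S iv) :=
  ⟨⟨∅, ⟨fun e he => absurd he (Finset.notMem_empty e),
      fun e he => absurd he (Finset.notMem_empty e)⟩,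
    fun _ => Set.univ, fun β hβ => ⟨isOpen_univ, Set.mem_univ β⟩⟩⟩

/-- The basic entourage associated to a datum. -/
def ent (d : Datum S iv) : Set (S × S) :=
  {p | (p.1 ∈ Blob iv d.A ∧ p.2 ∈ Blob iv d.A) ∨
    (p.1 * iv p.1 = p.2 * iv p.2 ∧ iv p.1 * p.1 = iv p.2 * p.2 ∧
      iv p.1 * p.1 ∈ d.A ∧ iv p.1 * p.2 ∈ d.O (iv p.1 * p.1))}

theorem ent_refl (d : Datum S iv) (y : S) : (y, y) ∈ ent iv d := by
  by_cases h : iv y * y ∈ d.A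
  · exact Or.inr ⟨rfl, rfl, h, (d.hO _ h).2⟩
  · exact Or.inl ⟨h, h⟩

include hinvc hinv

/-- destructor for the cell branch. -/
theorem ent_cellm {d : Datum S iv} {y y' : S} (h : (y, y') ∈ ent iv d)
    (hcol : iv y * y ∈ d.A) :
    y * iv y = y' * iv y' ∧ iv y * y = iv y' * y' ∧
      iv y * y' ∈ d.O (iv y * y) ∧ y ≠ 0 ∧ y' ≠ 0 ∧ y * (iv y * y') = y' := by
  rcases h with ⟨h1, _⟩ | ⟨h1, h2, _, h4⟩
  · exact absurd hcol h1
  · have hy0 : y ≠ 0 := by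
      rintro rfl
      rw [iv_zero iv hinv, mul_zero] at hcol
      exact (d.hA.1 0 hcol).1 rfl
    have hy'0 : y' ≠ 0 := by
      rintro rfl
      rw [iv_zero iv hinv, mul_zero] at h2
      exact (d.hA.1 _ hcol).1 h2
    have hrec : y * (iv y * y') = y' :=
      cell_reconstruct iv hinv (row_ne_zero iv hinv hy0)
        ⟨rfl, rfl⟩ ⟨h1.symm, h2.symm⟩
    exact ⟨h1, h2, h4, hy0, hy'0, hrec⟩

theorem ent_symm (d : Datum S iv) :
    ∃ d' : Datum S iv, ∀ p ∈ ent iv d', (p.2, p.1) ∈ ent iv d := by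
  refine ⟨⟨d.A, d.hA, fun β => d.O β ∩ iv ⁻¹' d.O β, fun β hβ =>
    ⟨((d.hO β hβ).1).inter (((d.hO β hβ).1).preimage hinvc), (d.hO β hβ).2,
      by rw [Set.mem_preimage, iv_idem iv hinv (d.hA.1 β hβ).2]; exact (d.hO β hβ).2⟩⟩, ?_⟩
  rintro ⟨y, y'⟩ hp
  rcases hp with ⟨h1, h2⟩ | ⟨h1, h2, h3, h4⟩
  · exact Or.inl ⟨h2, h1⟩
  · refine Or.inr ⟨h1.symm, h2.symm, h2 ▸ h3, ?_⟩
    have hg : iv (iv y * y') ∈ d.O (iv y * y) := h4.2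
    rw [iv_mul iv hinv, iv_iv iv hinv] at hg
    rw [← h2]
    exact hg

theorem ent_comp (d : Datum S iv) :
    ∃ d' : Datum S iv, ∀ x y z : S,
      (x, y) ∈ ent iv d' → (y, z) ∈ ent iv d' → (x, z) ∈ ent iv d := by
  classical
  have hch : ∀ β : S, ∃ Ob : Set S, IsOpen Ob ∧ β ∈ Ob ∧
      (β ∈ d.A → Ob ⊆ d.O β ∧ ∀ g ∈ Ob, ∀ h ∈ Ob, g * h ∈ d.O β) := by
    intro β
    by_cases hβ : β ∈ d.A
    · obtain ⟨O', h1, h2, h3, h4⟩ :=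
        mulO iv hinvc hinv (d.hA.1 β hβ).2 (d.hO β hβ).1 (d.hO β hβ).2
      exact ⟨O', h1, h2, fun _ => ⟨h3, h4⟩⟩
    · exact ⟨Set.univ, isOpen_univ, Set.mem_univ β, fun h => absurd h hβ⟩
  choose Ob hOb using hch
  refine ⟨⟨d.A, d.hA, Ob, fun β hβ => ⟨(hOb β).1, (hOb β).2.1⟩⟩, ?_⟩
  intro x y z hxy hyz
  by_cases hcx : iv x * x ∈ d.A
  · obtain ⟨e1, e2, e3, hx0, hy0, hrec⟩ := ent_cellm iv hinvc hinv hxy hcx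
    have hcy : iv y * y ∈ d.A := e2 ▸ hcx
    obtain ⟨f1, f2, f3, hy0', hz0, hrec'⟩ := ent_cellm iv hinvc hinv hyz hcy
    refine Or.inr ⟨e1.trans f1, e2.trans f2, hcx, ?_⟩
    have hxz : iv x * z = (iv x * y) * (iv y * z) := by
      conv_lhs => rw [← hrec']
      simp [mul_assoc]
    rw [hxz]
    have hgx : iv x * y ∈ Ob (iv x * x) := e3
    have hgy : iv y * z ∈ Ob (iv x * x) := by rw [e2]; exact f3
    exact ((hOb _).2.2 hcx).2 _ hgx _ hgy
  · have hxb : x ∈ Blob iv d.A := hcx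
    have hyb : y ∈ Blob iv d.A := by
      rcases hxy with ⟨_, h2⟩ | ⟨_, h2, h3, _⟩
      · exact h2
      · exact absurd h3 hcx
    have hzb : z ∈ Blob iv d.A := by
      rcases hyz with ⟨_, h2⟩ | ⟨_, h2, h3, _⟩
      · exact h2
      · exact absurd h3 hyb
    exact Or.inl ⟨hxb, hzb⟩

omit hinvc hinv

theorem ent_directed (d₁ d₂ : Datum S iv) :
    ∃ d₃ : Datum S iv, ent iv d₃ ⊆ ent iv d₁ ∧ ent iv d₃ ⊆ ent iv d₂ := by
  classical
  have hA3 : DCl iv (d₁.A ∪ d₂.A) := by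
    constructor
    · intro e he
      rcases Finset.mem_union.mp he with h | h
      · exact d₁.hA.1 e h
      · exact d₂.hA.1 e h
    · intro e he f hf
      rcases Finset.mem_union.mp he with h | h
      · exact Finset.mem_union_left _ (d₁.hA.2 e h f hf)
      · exact Finset.mem_union_right _ (d₂.hA.2 e h f hf)
  have hO3 : ∀ β ∈ d₁.A ∪ d₂.A,
      IsOpen ((if β ∈ d₁.A then d₁.O β else Set.univ) ∩
        (if β ∈ d₂.A then d₂.O β else Set.univ)) ∧
      β ∈ (if β ∈ d₁.A then d₁.O β else Set.univ) ∩
        (if β ∈ d₂.A then d₂.O β else Set.univ) := by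
    intro β hβ
    constructor
    · apply IsOpen.inter
      · split_ifs with h1
        · exact (d₁.hO β h1).1
        · exact isOpen_univ
      · split_ifs with h2
        · exact (d₂.hO β h2).1
        · exact isOpen_univ
    · constructor
      · split_ifs with h1
        · exact (d₁.hO β h1).2
        · exact Set.mem_univ β
      · split_ifs with h2
        · exact (d₂.hO β h2).2
        · exact Set.mem_univ β
  refine ⟨⟨d₁.A ∪ d₂.A, hA3, fun β =>
    (if β ∈ d₁.A then d₁.O β else Set.univ) ∩ (if β ∈ d₂.A then d₂.O β else Set.univ),
    hO3⟩, ?_, ?_⟩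
  · rintro ⟨y, y'⟩ hp
    rcases hp with ⟨h1, h2⟩ | ⟨h1, h2, h3, h4⟩
    · exact Or.inl ⟨fun h => h1 (Finset.mem_union_left _ h),
        fun h => h2 (Finset.mem_union_left _ h)⟩
    · by_cases hc : iv y * y ∈ d₁.A
      · refine Or.inr ⟨h1, h2, hc, ?_⟩
        have := h4.1
        rwa [if_pos hc] at this
      · exact Or.inl ⟨hc, fun h => hc (h2 ▸ h : iv y * y ∈ d₁.A)⟩
  · rintro ⟨y, y'⟩ hp
    rcases hp with ⟨h1, h2⟩ | ⟨h1, h2, h3, h4⟩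
    · exact Or.inl ⟨fun h => h1 (Finset.mem_union_right _ h),
        fun h => h2 (Finset.mem_union_right _ h)⟩
    · by_cases hc : iv y * y ∈ d₂.A
      · refine Or.inr ⟨h1, h2, hc, ?_⟩
        have := h4.2
        rwa [if_pos hc] at this
      · exact Or.inl ⟨hc, fun h => hc (h2 ▸ h : iv y * y ∈ d₂.A)⟩

/-- The uniformity filter. -/
def unifF : Filter (S × S) := ⨅ d : Datum S iv, Filter.principal (ent iv d)

theorem unifF_basis :
    (unifF iv).HasBasis (fun _ : Datum S iv => True) (ent iv) :=
  Filter.hasBasis_iInf_principal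
    (fun d₁ d₂ => by
      obtain ⟨d₃, h1, h2⟩ := ent_directed iv d₁ d₂
      exact ⟨d₃, h1, h2⟩)

theorem mem_unifF {s : Set (S × S)} :
    s ∈ unifF iv ↔ ∃ d : Datum S iv, ent iv d ⊆ s := by
  rw [(unifF_basis iv).mem_iff]
  simp

include hinvc hinv hprim

theorem ball_mem_nhds (d : Datum S iv) (x : S) :
    Prod.mk x ⁻¹' ent iv d ∈ 𝓝 x := by
  by_cases hx : iv x * x ∈ d.A
  · have hx0 : x ≠ 0 := by
      rintro rfl
      rw [iv_zero iv hinv, mul_zero] at hx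
      exact (d.hA.1 0 hx).1 rfl
    have hcell : IsOpen (cell iv (x * iv x) (iv x * x)) :=
      cell_open iv hinvc hinv hx0 ⟨rfl, rfl⟩ hprim
    have hpre : IsOpen ((fun y : S => iv x * y) ⁻¹' d.O (iv x * x)) :=
      ((d.hO _ hx).1).preimage (continuous_const.mul continuous_id)
    apply Filter.mem_of_superset
      ((hcell.inter hpre).mem_nhds ⟨⟨rfl, rfl⟩, (d.hO _ hx).2⟩)
    rintro y ⟨hyc, hyg⟩
    exact Or.inr ⟨hyc.1.symm, hyc.2.symm, hx, hyg⟩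
  · apply Filter.mem_of_superset ((blob_open iv hinvc hinv hprim d.A).mem_nhds hx)
    intro y hy
    exact Or.inl ⟨hx, hy⟩

include hcc

theorem nhds_eq (x : S) : 𝓝 x = (unifF iv).comap (Prod.mk x) := by
  classical
  apply le_antisymm
  · intro s hs
    obtain ⟨t, ht, hsub⟩ := Filter.mem_comap.mp hs
    obtain ⟨d, hd⟩ := (mem_unifF iv).mp ht
    exact Filter.mem_of_superset (ball_mem_nhds iv hinvc hinv hprim d x)
      ((Set.preimage_mono hd).trans hsub)
  · intro N hN
    rw [Filter.mem_comap]
    rw [mem_nhds_iff] at hN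
    obtain ⟨N', hsub, hN'o, hxN'⟩ := hN
    by_cases hx0 : x = 0
    · subst hx0
      obtain ⟨A, hA, hblob⟩ := blob_basis iv hinvc hinv hprim hcc hN'o hxN'
      refine ⟨ent iv ⟨A, hA, fun _ => Set.univ, fun β _ => ⟨isOpen_univ, trivial⟩⟩,
        (mem_unifF iv).mpr ⟨_, subset_rfl⟩, ?_⟩
      intro y hy
      rcases hy with ⟨_, h2⟩ | ⟨_, _, h3, _⟩
      · exact hsub (hblob h2)
      · exfalso
        rw [iv_zero iv hinv, mul_zero] at h3
        exact (hA.1 0 h3).1 rfl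
    · set A := (Dfin iv hinvc hinv hprim hcc (iv x * x)).toFinset with hAdef
      have hAmem : ∀ f : S, f ∈ A ↔ Drel iv (iv x * x) f := fun f =>
        Set.Finite.mem_toFinset _
      have hA : DCl iv A := by
        constructor
        · intro e he
          have h2 := Drel.ne_zero iv hinv ((hAmem e).mp he)
          exact ⟨h2.2.2.1, h2.2.2.2⟩
        · intro e he f hf
          exact (hAmem f).mpr (Drel.trans' iv hinv hprim ((hAmem e).mp he) hf)
      have hcolA : iv x * x ∈ A := (hAmem _).mpr
        (Drel.refl iv hinv (col_ne_zero iv hinv hx0) (col_idem iv hinv x))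
      set O : S → Set S := fun β =>
        if β = iv x * x then (fun g : S => x * g) ⁻¹' N' else Set.univ with hOdef
      have hO : ∀ β ∈ A, IsOpen (O β) ∧ β ∈ O β := by
        intro β hβ
        simp only [hOdef]
        split_ifs with h
        · subst h
          refine ⟨hN'o.preimage (continuous_mul_left x), ?_⟩
          have : x * (iv x * x) = x := by rw [← mul_assoc]; exact a1 iv hinv x
          simpa [this] using hxN'
        · exact ⟨isOpen_univ, trivial⟩
      refine ⟨ent iv ⟨A, hA, O, hO⟩, (mem_unifF iv).mpr ⟨_, subset_rfl⟩, ?_⟩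
      intro y hy
      obtain ⟨e1, e2, e3, _, _, hrec⟩ := ent_cellm iv hinvc hinv hy hcolA
      have : iv x * y ∈ (fun g : S => x * g) ⁻¹' N' := by
        have h4 := e3
        simp only [hOdef, if_pos rfl] at h4
        exact h4
      have hyN' : x * (iv x * y) ∈ N' := this
      rw [hrec] at hyN'
      exact hsub hyN'

/-- The totally bounded uniform structure on `S` inducing the given topology. -/
@[reducible] def uS : UniformSpace S where
  uniformity := unifF iv
  toTopologicalSpace := ‹_›
  symm := by
    intro s hs
    obtain ⟨d, hd⟩ := (mem_unifF iv).mp hs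
    obtain ⟨d', hd'⟩ := ent_symm iv hinvc hinv d
    refine (mem_unifF iv).mpr ⟨d', fun p hp => ?_⟩
    exact hd (hd' p hp)
  comp := by
    intro s hs
    obtain ⟨d, hd⟩ := (mem_unifF iv).mp hs
    obtain ⟨d', hd'⟩ := ent_comp iv hinvc hinv d
    refine (Filter.mem_lift'_sets (Monotone.relComp monotone_id monotone_id)).mpr
      ⟨ent iv d', (mem_unifF iv).mpr ⟨d', subset_rfl⟩, ?_⟩
    rintro ⟨a, c⟩ ⟨b, hab, hbc⟩
    exact hd (hd' a b c hab hbc)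
  nhds_eq_comap_uniformity := nhds_eq iv hinvc hinv hprim hcc

theorem totB : @TotallyBounded S (uS iv hinvc hinv hprim hcc) Set.univ := by
  classical
  intro dd hdd
  obtain ⟨d0, hd0⟩ := (mem_unifF iv).mp hdd
  obtain ⟨d', hd'⟩ := ent_symm iv hinvc hinv d0
  have hch : ∀ α β : S, ∃ t : Finset S,
      (α ∈ d'.A → β ∈ d'.A → (↑t ⊆ cell iv α β ∧
        ∀ y ∈ cell iv α β, ∃ h ∈ t, iv h * y ∈ d'.O β)) := by
    intro α β
    by_cases hα : α ∈ d'.A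
    · by_cases hβ : β ∈ d'.A
      · obtain ⟨t, ht1, ht2⟩ := cell_TB iv hinvc hinv hprim hcc
          (d'.hA.1 α hα).1 (d'.hA.1 β hβ).1 (d'.hO β hβ).1 (d'.hO β hβ).2
        exact ⟨t, fun _ _ => ⟨ht1, ht2⟩⟩
      · exact ⟨∅, fun _ h => absurd h hβ⟩
    · exact ⟨∅, fun h => absurd h hα⟩
  choose tf htf using hch
  refine ⟨insert 0 (⋃ α ∈ (d'.A : Set S), ⋃ β ∈ (d'.A : Set S), (tf α β : Set S)),
    Set.Finite.insert 0 (Set.Finite.biUnion d'.A.finite_toSet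
      (fun α _ => Set.Finite.biUnion d'.A.finite_toSet
        (fun β _ => (tf α β).finite_toSet))), ?_⟩
  intro x _
  rw [Set.mem_iUnion₂]
  by_cases hcx : iv x * x ∈ d'.A
  · have hx0 : x ≠ 0 := by
      rintro rfl
      rw [iv_zero iv hinv, mul_zero] at hcx
      exact (d'.hA.1 0 hcx).1 rfl
    have hrxA : x * iv x ∈ d'.A :=
      d'.hA.2 _ hcx _ (Drel.symm' iv hinv ⟨x, hx0, rfl, rfl⟩)
    obtain ⟨ht1, ht2⟩ := htf (x * iv x) (iv x * x) hrxA hcx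
    obtain ⟨h, hht, hhO⟩ := ht2 x ⟨rfl, rfl⟩
    have hhc : h ∈ cell iv (x * iv x) (iv x * x) := ht1 hht
    have hent : (h, x) ∈ ent iv d' := by
      refine Or.inr ⟨?_, ?_, ?_, ?_⟩
      · rw [hhc.1]
      · rw [hhc.2]
      · rw [hhc.2]; exact hcx
      · rw [hhc.2]; exact hhO
    refine ⟨h, ?_, hd' _ hent |> fun hh => hd0 hh⟩
    exact Set.mem_insert_iff.mpr (Or.inr (Set.mem_biUnion hrxA (Set.mem_biUnion hcx hht)))
  · have hent : (0, x) ∈ ent iv d' :=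
      Or.inl ⟨zero_mem_blob iv hinvc hinv hprim d'.hA, hcx⟩
    exact ⟨0, Set.mem_insert 0 _, hd0 (hd' _ hent)⟩

theorem entMul (d : Datum S iv) :
    ∃ d' : Datum S iv, ∀ y y' z z' : S,
      (y, y') ∈ ent iv d' → (z, z') ∈ ent iv d' → (y * z, y' * z') ∈ ent iv d := by
  classical
  have hch2 : ∀ β : S, ∃ O2 : Set S, IsOpen O2 ∧ β ∈ O2 ∧
      (β ∈ d.A → O2 ⊆ d.O β ∧ ∀ g ∈ O2, ∀ h ∈ O2, g * h ∈ d.O β) := by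
    intro β
    by_cases hβ : β ∈ d.A
    · obtain ⟨O', h1, h2, h3, h4⟩ :=
        mulO iv hinvc hinv (d.hA.1 β hβ).2 (d.hO β hβ).1 (d.hO β hβ).2
      exact ⟨O', h1, h2, fun _ => ⟨h3, h4⟩⟩
    · exact ⟨Set.univ, isOpen_univ, Set.mem_univ β, fun h => absurd h hβ⟩
  choose O₂ hO₂ using hch2
  have hch3 : ∀ β : S, ∃ Ob : Set S, IsOpen Ob ∧ β ∈ Ob ∧ Ob ⊆ O₂ β ∧
      (β ∈ d.A → ∀ δ ∈ d.A, ∀ z ∈ cell iv β δ, ∀ g ∈ Ob,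
        iv z * (g * z) ∈ O₂ δ) := by
    intro β
    by_cases hβ : β ∈ d.A
    · have hinner : ∀ δ : S, ∃ C : Set S, IsOpen C ∧ β ∈ C ∧
          (δ ∈ d.A → ∀ z ∈ cell iv β δ, ∀ g ∈ C, iv z * (g * z) ∈ O₂ δ) := by
        intro δ
        by_cases hδ : δ ∈ d.A
        · obtain ⟨C, hC1, hC2, hC3⟩ := conjO iv hinvc hinv hprim hcc
            (d.hA.1 β hβ).1 (d.hA.1 β hβ).2 (d.hA.1 δ hδ).1 (d.hA.1 δ hδ).2
            (hO₂ δ).1 (hO₂ δ).2.1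
          exact ⟨C, hC1, hC2, fun _ => hC3⟩
        · exact ⟨Set.univ, isOpen_univ, Set.mem_univ β, fun h => absurd h hδ⟩
      choose C hC using hinner
      refine ⟨O₂ β ∩ ⋂ δ ∈ d.A, C δ,
        (hO₂ β).1.inter (isOpen_biInter_finset fun δ _ => (hC δ).1),
        ⟨(hO₂ β).2.1, Set.mem_iInter₂.mpr fun δ _ => (hC δ).2.1⟩,
        Set.inter_subset_left, ?_⟩
      intro _ δ hδ z hz g hg
      exact (hC δ).2.2 hδ z hz g (Set.mem_iInter₂.mp hg.2 δ hδ)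
    · exact ⟨O₂ β, (hO₂ β).1, (hO₂ β).2.1, subset_rfl, fun h => absurd h hβ⟩
  choose Ob hOb using hch3
  refine ⟨⟨d.A, d.hA, Ob, fun β hβ => ⟨(hOb β).1, (hOb β).2.1⟩⟩, ?_⟩
  intro y y' z z' hy hz
  by_cases hcy : iv y * y ∈ d.A
  · obtain ⟨e1, e2, e3, hy0, hy'0, hyrec⟩ := ent_cellm iv hinvc hinv hy hcy
    by_cases hcz : iv z * z ∈ d.A
    · obtain ⟨f1, f2, f3, hz0, hz'0, hzrec⟩ := ent_cellm iv hinvc hinv hz hcz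
      by_cases hβγ : z * iv z = iv y * y
      · -- same inner idempotent: products are nonzero, cell branch
        obtain ⟨g, hgO, hgy, hgu⟩ :
            ∃ g, g ∈ Ob (iv y * y) ∧ y * g = y' ∧ (iv y * y) * g = g :=
          ⟨iv y * y', e3, hyrec, by
            calc (iv y * y) * (iv y * y') = (iv y * y * iv y) * y' := by
                  simp [mul_assoc]
            _ = iv y * y' := by rw [a2 iv hinv y]⟩
        obtain ⟨h, hhO, hhz⟩ : ∃ h, h ∈ Ob (iv z * z) ∧ z * h = z' :=
          ⟨iv z * z', f3, hzrec⟩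
        subst hgy hhz
        have hyz : y * z ≠ 0 := (mul_ne_zero_iff' iv hinv hprim hy0 hz0).mpr hβγ.symm
        have hy'c : iv (y * g) * (y * g) = iv y * y := e2.symm
        have hz'r : (z * h) * iv (z * h) = z * iv z := f1.symm
        have hy'z' : (y * g) * (z * h) ≠ 0 := by
          refine (mul_ne_zero_iff' iv hinv hprim hy'0 hz'0).mpr ?_
          rw [hy'c, hz'r, hβγ]
        have hk : iv z * (g * z) ∈ O₂ (iv z * z) :=
          (hOb (iv y * y)).2.2.2 hcy (iv z * z) hcz z ⟨hβγ, rfl⟩ g hgO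
        have key : iv (y * z) * ((y * g) * (z * h)) = (iv z * (g * z)) * h := by
          calc iv (y * z) * ((y * g) * (z * h))
              = (iv z * iv y) * ((y * g) * (z * h)) := by rw [iv_mul iv hinv]
          _ = iv z * (((iv y * y) * g) * (z * h)) := by simp [mul_assoc]
          _ = iv z * (g * (z * h)) := by rw [hgu]
          _ = (iv z * (g * z)) * h := by simp [mul_assoc]
        refine Or.inr ⟨?_, ?_, ?_, ?_⟩
        · rw [row_mul iv hinv hprim hyz, row_mul iv hinv hprim hy'z', e1]
        · rw [col_mul iv hinv hprim hyz, col_mul iv hinv hprim hy'z', f2]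
        · rw [col_mul iv hinv hprim hyz]; exact hcz
        · rw [col_mul iv hinv hprim hyz, key]
          exact ((hO₂ (iv z * z)).2.2 hcz).2 _ hk _ ((hOb (iv z * z)).2.2.1 hhO)
      · -- different inner idempotents: both products vanish
        have hyz : y * z = 0 := by
          by_contra hne
          exact hβγ ((mul_ne_zero_iff' iv hinv hprim hy0 hz0).mp hne).symm
        have hy'z' : y' * z' = 0 := by
          by_contra hne
          have h1 := (mul_ne_zero_iff' iv hinv hprim hy'0 hz'0).mp hne
          apply hβγ
          rw [f1, ← h1, ← e2]
        rw [hyz, hy'z']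
        exact Or.inl ⟨zero_mem_blob iv hinvc hinv hprim d.hA,
          zero_mem_blob iv hinvc hinv hprim d.hA⟩
    · -- z, z' in the blob
      have hzb : z ∈ Blob iv d.A ∧ z' ∈ Blob iv d.A := by
        rcases hz with ⟨h1, h2⟩ | ⟨_, _, h3, _⟩
        · exact ⟨h1, h2⟩
        · exact absurd h3 hcz
      have h1 : y * z = 0 := cell_mul_blob iv hinvc hinv hprim d.hA hcy hzb.1
      have h2 : y' * z' = 0 := cell_mul_blob iv hinvc hinv hprim d.hA
        (e2 ▸ hcy) hzb.2
      rw [h1, h2]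
      exact Or.inl ⟨zero_mem_blob iv hinvc hinv hprim d.hA,
        zero_mem_blob iv hinvc hinv hprim d.hA⟩
  · -- y, y' in the blob
    have hyb : y ∈ Blob iv d.A ∧ y' ∈ Blob iv d.A := by
      rcases hy with ⟨h1, h2⟩ | ⟨_, _, h3, _⟩
      · exact ⟨h1, h2⟩
      · exact absurd h3 hcy
    by_cases hcz : iv z * z ∈ d.A
    · obtain ⟨f1, f2, f3, hz0, hz'0, hzrec⟩ := ent_cellm iv hinvc hinv hz hcz
      have h1 : y * z = 0 := blob_mul_cell iv hinvc hinv hprim d.hA hyb.1 hcz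
      have h2 : y' * z' = 0 := blob_mul_cell iv hinvc hinv hprim d.hA hyb.2
        (f2 ▸ hcz)
      rw [h1, h2]
      exact Or.inl ⟨zero_mem_blob iv hinvc hinv hprim d.hA,
        zero_mem_blob iv hinvc hinv hprim d.hA⟩
    · have hzb : z ∈ Blob iv d.A ∧ z' ∈ Blob iv d.A := by
        rcases hz with ⟨h1, h2⟩ | ⟨_, _, h3, _⟩
        · exact ⟨h1, h2⟩
        · exact absurd h3 hcz
      exact Or.inl ⟨blob_mul_blob iv hinvc hinv hprim d.hA hyb.1 hzb.1,
        blob_mul_blob iv hinvc hinv hprim d.hA hyb.2 hzb.2⟩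

theorem entIv (d : Datum S iv) :
    ∃ d' : Datum S iv, ∀ p ∈ ent iv d', (iv p.1, iv p.2) ∈ ent iv d := by
  classical
  have hch : ∀ β : S, ∃ Ob : Set S, IsOpen Ob ∧ β ∈ Ob ∧
      (β ∈ d.A → ∀ α ∈ d.A, ∀ z ∈ cell iv β α, ∀ g ∈ Ob,
        iv z * (iv g * z) ∈ d.O α) := by
    intro β
    by_cases hβ : β ∈ d.A
    · have hinner : ∀ α : S, ∃ C : Set S, IsOpen C ∧ β ∈ C ∧
          (α ∈ d.A → ∀ z ∈ cell iv β α, ∀ g ∈ C, iv z * (g * z) ∈ d.O α) := by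
        intro α
        by_cases hα : α ∈ d.A
        · obtain ⟨C, hC1, hC2, hC3⟩ := conjO iv hinvc hinv hprim hcc
            (d.hA.1 β hβ).1 (d.hA.1 β hβ).2 (d.hA.1 α hα).1 (d.hA.1 α hα).2
            (d.hO α hα).1 (d.hO α hα).2
          exact ⟨C, hC1, hC2, fun _ => hC3⟩
        · exact ⟨Set.univ, isOpen_univ, Set.mem_univ β, fun h => absurd h hα⟩
      choose C hC using hinner
      refine ⟨⋂ α ∈ d.A, iv ⁻¹' C α,
        isOpen_biInter_finset (fun α _ => (hC α).1.preimage hinvc),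
        Set.mem_iInter₂.mpr fun α _ => ?_, ?_⟩
      · rw [Set.mem_preimage, iv_idem iv hinv (d.hA.1 β hβ).2]
        exact (hC α).2.1
      · intro _ α hα z hz g hg
        exact (hC α).2.2 hα z hz (iv g) (Set.mem_iInter₂.mp hg α hα)
    · exact ⟨Set.univ, isOpen_univ, Set.mem_univ β, fun h => absurd h hβ⟩
  choose Ob hOb using hch
  refine ⟨⟨d.A, d.hA, Ob, fun β hβ => ⟨(hOb β).1, (hOb β).2.1⟩⟩, ?_⟩
  rintro ⟨y, y'⟩ hp
  show (iv y, iv y') ∈ ent iv d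
  by_cases hcy : iv y * y ∈ d.A
  · obtain ⟨e1, e2, e3, hy0, hy'0, hyrec⟩ := ent_cellm iv hinvc hinv hp hcy
    have hrow : y * iv y ∈ d.A :=
      d.hA.2 _ hcy _ (Drel.symm' iv hinv ⟨y, hy0, rfl, rfl⟩)
    obtain ⟨g, hgO, hgy⟩ : ∃ g, g ∈ Ob (iv y * y) ∧ y * g = y' :=
      ⟨iv y * y', e3, hyrec⟩
    subst hgy
    refine Or.inr ⟨?_, ?_, ?_, ?_⟩
    · rw [iv_iv iv hinv, iv_iv iv hinv]; exact e2
    · rw [iv_iv iv hinv, iv_iv iv hinv]; exact e1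
    · rw [iv_iv iv hinv]; exact hrow
    · have hz : iv y ∈ cell iv (iv y * y) (y * iv y) :=
        cell_iv iv hinv (⟨rfl, rfl⟩ : y ∈ cell iv (y * iv y) (iv y * y))
      have hmain := (hOb (iv y * y)).2.2 hcy (y * iv y) hrow (iv y) hz g hgO
      rw [iv_iv iv hinv] at hmain
      rw [iv_iv iv hinv, iv_mul iv hinv]
      exact hmain
  · rcases hp with ⟨h1, h2⟩ | ⟨_, _, h3, _⟩
    · exact Or.inl ⟨blob_iv iv hinvc hinv hprim d.hA h1,
        blob_iv iv hinvc hinv hprim d.hA h2⟩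
    · exact absurd h3 hcy

theorem ucMul : @UniformContinuous (S × S) S
    (@instUniformSpaceProd S S (uS iv hinvc hinv hprim hcc) (uS iv hinvc hinv hprim hcc))
    (uS iv hinvc hinv hprim hcc) (fun p : S × S => p.1 * p.2) := by
  letI u : UniformSpace S := uS iv hinvc hinv hprim hcc
  rw [UniformContinuous, Filter.tendsto_def]
  intro s hs
  obtain ⟨d, hd⟩ := (mem_unifF iv).mp hs
  obtain ⟨d', hd'⟩ := entMul iv hinvc hinv hprim hcc d
  have hW : {q : (S × S) × S × S | (q.1.1, q.2.1) ∈ ent iv d' ∧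
      (q.1.2, q.2.2) ∈ ent iv d'} ∈ 𝓤 (S × S) := by
    rw [uniformity_prod_eq_comap_prod]
    exact Filter.preimage_mem_comap
      (Filter.prod_mem_prod ((mem_unifF iv).mpr ⟨d', subset_rfl⟩)
        ((mem_unifF iv).mpr ⟨d', subset_rfl⟩))
  refine Filter.mem_of_superset hW ?_
  rintro ⟨⟨y, z⟩, ⟨y', z'⟩⟩ ⟨h1, h2⟩
  exact hd (hd' y y' z z' h1 h2)

theorem ucIv : @UniformContinuous S S (uS iv hinvc hinv hprim hcc)
    (uS iv hinvc hinv hprim hcc) iv := by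
  letI u : UniformSpace S := uS iv hinvc hinv hprim hcc
  rw [UniformContinuous, Filter.tendsto_def]
  intro s hs
  obtain ⟨d, hd⟩ := (mem_unifF iv).mp hs
  obtain ⟨d', hd'⟩ := entIv iv hinvc hinv hprim hcc d
  refine Filter.mem_of_superset ((mem_unifF iv).mpr ⟨d', subset_rfl⟩) ?_
  intro p hp
  exact hd (hd' p hp)

end Unif

end Stmt10


open Stmt10 UniformSpace

/-- Every primitive countably compact Hausdorff topological inverse
semigroup `S` embeds as a dense topological inverse subsemigroup into a primitive
compact Hausdorff topological inverse semigroup `T`. -/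
theorem stmt_10 {S : Type u} [SemigroupWithZero S] [TopologicalSpace S] [T2Space S]
    [ContinuousMul S] [Nontrivial S]
    (inv : S → S) (hinvc : Continuous inv) (hinv : InvSgrp inv)
    (hcc : CountablyCompact S)
    (hprim : ∀ e : S, e ≠ 0 → e * e = e →
      ∀ f : S, f ≠ 0 → f * f = f → e * f = f → f * e = f → f = e) :
    ∃ (T : Type u) (tT : TopologicalSpace T) (mT : SemigroupWithZero T)
      (invT : T → T),
      letI := tT; letI := mT;
      T2Space T ∧ CompactSpace T ∧ ContinuousMul T ∧ Continuous invT ∧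
      InvSgrp invT ∧ Nontrivial T ∧
      (∀ e : T, e ≠ 0 → e * e = e →
        ∀ f : T, f ≠ 0 → f * f = f → e * f = f → f * e = f → f = e) ∧
      ∃ emb : S → T, Topology.IsEmbedding emb ∧ DenseRange emb ∧
        (∀ x y : S, emb (x * y) = emb x * emb y) ∧ emb 0 = 0 ∧
        ∀ x : S, emb (inv x) = invT (emb x) := by
  classical
  letI u : UniformSpace S := Stmt10.uS inv hinvc hinv hprim hcc
  set T := UniformSpace.Completion S with hTdef
  let q : S → T := fun a => (a : Completion S)
  let m : T → T → T := Completion.map₂ (· * ·)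
  let ivT : T → T := Completion.map inv
  have huc2 : UniformContinuous₂ (fun a b : S => a * b) :=
    Stmt10.ucMul inv hinvc hinv hprim hcc
  have hmcoe : ∀ a b : S, m (q a) (q b) = q (a * b) := fun a b =>
    Completion.map₂_coe_coe a b _ huc2
  have hucIv : UniformContinuous inv := Stmt10.ucIv inv hinvc hinv hprim hcc
  have hivcoe : ∀ a : S, ivT (q a) = q (inv a) := fun a => Completion.map_coe hucIv a
  have hmc : Continuous fun p : T × T => m p.1 p.2 :=
    Completion.continuous_map₂ continuous_fst continuous_snd
  have hivc : Continuous ivT := Completion.continuous_map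
  have hqc : Continuous q := Completion.continuous_coe S
  have hqdense : DenseRange q := Completion.denseRange_coe
  have hqinj : Function.Injective q := Completion.coe_injective S
  have hassoc : ∀ a b c : T, m (m a b) c = m a (m b c) := by
    intro a b c
    refine Completion.induction_on₃ a b c ?_ ?_
    · apply isClosed_eq
      · exact Completion.continuous_map₂
          (Completion.continuous_map₂ continuous_fst (continuous_fst.comp continuous_snd))
          (continuous_snd.comp continuous_snd)
      · exact Completion.continuous_map₂ continuous_fst
          (Completion.continuous_map₂ (continuous_fst.comp continuous_snd)
            (continuous_snd.comp continuous_snd))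
    · intro a b c
      show m (m (q a) (q b)) (q c) = m (q a) (m (q b) (q c))
      rw [hmcoe, hmcoe, hmcoe, hmcoe, mul_assoc]
  have hzm : ∀ a : T, m (q 0) a = q 0 := by
    intro a
    refine Completion.induction_on a ?_ ?_
    · exact isClosed_eq (Completion.continuous_map₂ continuous_const continuous_id)
        continuous_const
    · intro a
      show m (q 0) (q a) = q 0
      rw [hmcoe, zero_mul]
  have hmz : ∀ a : T, m a (q 0) = q 0 := by
    intro a
    refine Completion.induction_on a ?_ ?_
    · exact isClosed_eq (Completion.continuous_map₂ continuous_id continuous_const)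
        continuous_const
    · intro a
      show m (q a) (q 0) = q 0
      rw [hmcoe, mul_zero]
  have hid1 : ∀ x : T, m (m x (ivT x)) x = x := by
    intro x
    refine Completion.induction_on x ?_ ?_
    · exact isClosed_eq (Completion.continuous_map₂
        (Completion.continuous_map₂ continuous_id hivc) continuous_id) continuous_id
    · intro a
      show m (m (q a) (ivT (q a))) (q a) = q a
      rw [hivcoe, hmcoe, hmcoe, hinv.1]
  have hid2 : ∀ x : T, m (m (ivT x) x) (ivT x) = ivT x := by
    intro x
    refine Completion.induction_on x ?_ ?_
    · exact isClosed_eq (Completion.continuous_map₂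
        (Completion.continuous_map₂ hivc continuous_id) hivc) hivc
    · intro a
      show m (m (ivT (q a)) (q a)) (ivT (q a)) = ivT (q a)
      rw [hivcoe, hmcoe, hmcoe, hinv.2.1]
  -- decomposition of T into blob closure and cell closures
  have hblob_closure : ∀ A : Finset S, Stmt10.DCl inv A → ∀ x : T,
      x ∈ closure (q '' Stmt10.Blob inv A) ∨
        x ∈ ⋃ α ∈ (A : Set S), ⋃ β ∈ (A : Set S),
          closure (q '' Stmt10.cell inv α β) := by
    intro A hA x
    have hdecomp : Set.range q ⊆
        q '' Stmt10.Blob inv A ∪ ⋃ α ∈ (A : Set S), ⋃ β ∈ (A : Set S),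
          q '' Stmt10.cell inv α β := by
      rintro _ ⟨y, rfl⟩
      by_cases hc : inv y * y ∈ A
      · have hy0 : y ≠ 0 := by
          intro h
          rw [h, Stmt10.iv_zero inv hinv, mul_zero] at hc
          exact (hA.1 0 hc).1 rfl
        refine Or.inr (Set.mem_biUnion ?_ (Set.mem_biUnion hc ⟨y, ⟨rfl, rfl⟩, rfl⟩))
        exact hA.2 _ hc _ (Stmt10.Drel.symm' inv hinv ⟨y, hy0, rfl, rfl⟩)
      · exact Or.inl ⟨y, hc, rfl⟩
    have h1 : x ∈ closure (Set.range q) := by rw [hqdense.closure_range]; trivial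
    have h2 := closure_mono hdecomp h1
    rw [closure_union] at h2
    rcases h2 with h | h
    · exact Or.inl h
    right
    rw [Set.Finite.closure_biUnion A.finite_toSet] at h
    rw [Set.mem_iUnion₂] at h
    obtain ⟨α, hα, h⟩ := h
    rw [Set.Finite.closure_biUnion A.finite_toSet] at h
    rw [Set.mem_iUnion₂] at h
    obtain ⟨β, hβ, h⟩ := h
    exact Set.mem_biUnion hα (Set.mem_biUnion hβ h)
  have hzero_unique : ∀ x : T,
      (∀ A : Finset S, Stmt10.DCl inv A → x ∈ closure (q '' Stmt10.Blob inv A)) →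
      x = q 0 := by
    intro x hall
    by_contra hne
    have hF : Filter.Tendsto q (𝓝 (0 : S)) (𝓝 (q 0)) := hqc.tendsto 0
    have hclus : ClusterPt x (Filter.map q (𝓝 (0 : S))) := by
      rw [clusterPt_iff_nonempty]
      intro U hU V hV
      rw [Filter.mem_map, _root_.mem_nhds_iff] at hV
      obtain ⟨M, hMsub, hMopen, h0M⟩ := hV
      obtain ⟨A, hA, hblob⟩ :=
        Stmt10.blob_basis inv hinvc hinv hprim hcc hMopen h0M
      have hx := hall A hA
      rw [mem_closure_iff_nhds] at hx
      obtain ⟨w, hwU, hwim⟩ := hx U hU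
      obtain ⟨y, hy, rfl⟩ := hwim
      exact ⟨q y, hwU, hMsub (hblob hy)⟩
    have hle : 𝓝 x ⊓ Filter.map q (𝓝 (0 : S)) ≤ 𝓝 x ⊓ 𝓝 (q 0) :=
      inf_le_inf_left _ hF
    have hnb : Filter.NeBot (𝓝 x ⊓ 𝓝 (q 0)) := Filter.NeBot.mono hclus hle
    exact hne (eq_of_nhds_neBot hnb)
  -- products of closures land in closure of products
  have hprodcl : ∀ (X Y : Set S) (v w : T), v ∈ closure (q '' X) →
      w ∈ closure (q '' Y) →
      m v w ∈ closure (q '' Set.image2 (· * ·) X Y) := by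
    intro X Y v w hv hw
    have hcl : IsClosed {p : T × T |
        m p.1 p.2 ∈ closure (q '' Set.image2 (· * ·) X Y)} :=
      IsClosed.preimage hmc isClosed_closure
    have hsub : (q '' X) ×ˢ (q '' Y) ⊆ {p : T × T |
        m p.1 p.2 ∈ closure (q '' Set.image2 (· * ·) X Y)} := by
      rintro ⟨v', w'⟩ ⟨⟨a, ha, rfl⟩, ⟨b, hb, rfl⟩⟩
      show m (q a) (q b) ∈ closure (q '' Set.image2 (· * ·) X Y)
      rw [hmcoe]
      exact subset_closure ⟨a * b, Set.mem_image2_of_mem ha hb, rfl⟩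
    have hvw : (v, w) ∈ closure ((q '' X) ×ˢ (q '' Y)) := by
      rw [closure_prod_eq]; exact ⟨hv, hw⟩
    exact closure_minimal hsub hcl hvw
  -- classification of idempotents of T
  have hidem : ∀ x : T, x ≠ q 0 → m x x = x →
      ∃ γ : S, γ ≠ 0 ∧ γ * γ = γ ∧ x = q γ := by
    intro x hx0 hxx
    have hAex : ∃ A : Finset S, Stmt10.DCl inv A ∧
        x ∉ closure (q '' Stmt10.Blob inv A) := by
      by_contra hno
      push_neg at hno
      exact hx0 (hzero_unique x fun A hA => hno A hA)
    obtain ⟨A, hA, hxblob⟩ := hAex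
    rcases hblob_closure A hA x with h | h
    · exact absurd h hxblob
    rw [Set.mem_iUnion₂] at h
    obtain ⟨α, hα, h⟩ := h
    rw [Set.mem_iUnion₂] at h
    obtain ⟨β, hβ, h⟩ := h
    have hα0 : α ≠ 0 := (hA.1 α hα).1
    rcases eq_or_ne β α with hβα | hβα
    · subst hβα
      have hu1 : ∀ v ∈ closure (q '' Stmt10.cell inv β β), m v (q β) = v := by
        intro v hv
        have hcl : IsClosed {v : T | m v (q β) = v} :=
          isClosed_eq (Completion.continuous_map₂ continuous_id continuous_const)
            continuous_id
        have hsub : q '' Stmt10.cell inv β β ⊆ {v : T | m v (q β) = v} := by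
          rintro _ ⟨a, ha, rfl⟩
          show m (q a) (q β) = q a
          rw [hmcoe, Stmt10.cell_right_unit inv hinv ha]
        exact closure_minimal hsub hcl hv
      have hu2 : ∀ v ∈ closure (q '' Stmt10.cell inv β β), m v (ivT v) = q β := by
        intro v hv
        have hcl : IsClosed {v : T | m v (ivT v) = q β} :=
          isClosed_eq (Completion.continuous_map₂ continuous_id hivc) continuous_const
        have hsub : q '' Stmt10.cell inv β β ⊆ {v : T | m v (ivT v) = q β} := by
          rintro _ ⟨a, ha, rfl⟩
          show m (q a) (ivT (q a)) = q β
          rw [hivcoe, hmcoe, ha.1]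
        exact closure_minimal hsub hcl hv
      refine ⟨β, hα0, (hA.1 β hα).2, ?_⟩
      calc x = m x (q β) := (hu1 x h).symm
      _ = m x (m x (ivT x)) := by rw [hu2 x h]
      _ = m (m x x) (ivT x) := (hassoc _ _ _).symm
      _ = m x (ivT x) := by rw [hxx]
      _ = q β := hu2 x h
    · exfalso
      have hzero : Set.image2 (· * ·) (Stmt10.cell inv α β) (Stmt10.cell inv α β) ⊆
          ({0} : Set S) := by
        rintro _ ⟨a, ha, b, hb, rfl⟩
        exact Stmt10.cell_cross_zero inv hinv hprim hα0 hα0 ha hb hβα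
      have hx2 := hprodcl _ _ x x h h
      have hsub2 : q '' Set.image2 (· * ·) (Stmt10.cell inv α β)
          (Stmt10.cell inv α β) ⊆ ({q 0} : Set T) := by
        rintro _ ⟨a, ha, rfl⟩
        have : a = 0 := hzero ha
        rw [this]
        rfl
      have hmem : m x x ∈ ({q 0} : Set T) :=
        closure_minimal hsub2 isClosed_singleton hx2
      rw [hxx] at hmem
      exact hx0 hmem
  -- idempotents commute in T
  have hcomm : ∀ uu vv : T, m uu uu = uu → m vv vv = vv → m uu vv = m vv uu := by
    intro uu vv hu hv
    by_cases hu0 : uu = q 0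
    · rw [hu0, hzm vv, hmz vv]
    by_cases hv0 : vv = q 0
    · rw [hv0, hzm uu, hmz uu]
    obtain ⟨γ, hγ0, hγ, rfl⟩ := hidem uu hu0 hu
    obtain ⟨δ, hδ0, hδ, rfl⟩ := hidem vv hv0 hv
    rw [hmcoe, hmcoe, Stmt10.idem_comm inv hinv hγ hδ]
  -- uniqueness of inverses in T
  have huniq : ∀ x y : T, m (m x y) x = x → m (m y x) y = y → y = ivT x := by
    intro x y h1 h2
    set x' := ivT x with hx'def
    have i1 : m (m x x') x = x := hid1 x
    have i2 : m (m x' x) x' = x' := hid2 x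
    have he1 : m (m x y) (m x y) = m x y := by
      have h := hassoc (m x y) x y
      rw [h1] at h
      exact h.symm
    have hf1 : m (m y x) (m y x) = m y x := by
      have h := hassoc (m y x) y x
      rw [h2] at h
      exact h.symm
    have he2 : m (m x x') (m x x') = m x x' := by
      have h := hassoc (m x x') x x'
      rw [i1] at h
      exact h.symm
    have hf2 : m (m x' x) (m x' x) = m x' x := by
      have h := hassoc (m x' x) x' x
      rw [i2] at h
      exact h.symm
    have hstar : m (m x' x) (m y x) = m y x := by
      have hc := hcomm _ _ hf1 hf2
      rw [← hc]
      calc m (m y x) (m x' x) = m y (m x (m x' x)) := hassoc _ _ _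
      _ = m y (m (m x x') x) := by
            rw [show m x (m x' x) = m (m x x') x from (hassoc x x' x).symm]
      _ = m y x := by rw [i1]
    have hy1 : y = m (m x' x) y := by
      calc y = m (m y x) y := h2.symm
      _ = m (m (m x' x) (m y x)) y := by rw [hstar]
      _ = m (m x' x) (m (m y x) y) := hassoc _ _ _
      _ = m (m x' x) y := by rw [h2]
    have habs : m x x' = m (m x x') (m x y) := by
      have hc := hcomm _ _ he1 he2
      rw [← hc]
      have : m (m x y) (m x x') = m x x' := by
        calc m (m x y) (m x x') = m (m (m x y) x) x' := (hassoc _ _ _).symm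
        _ = m x x' := by rw [h1]
      exact this.symm
    have hx1 : x' = m (m x' x) y := by
      calc x' = m (m x' x) x' := i2.symm
      _ = m x' (m x x') := hassoc _ _ _
      _ = m x' (m (m x x') (m x y)) := by rw [← habs]
      _ = m (m x' (m x x')) (m x y) := (hassoc _ _ _).symm
      _ = m (m (m x' x) x') (m x y) := by
            rw [show m x' (m x x') = m (m x' x) x' from (hassoc x' x x').symm]
      _ = m x' (m x y) := by rw [i2]
      _ = m (m x' x) y := (hassoc _ _ _).symm
    rw [hy1, ← hx1]
  -- primitivity of T
  have hprimT : ∀ e : T, e ≠ q 0 → m e e = e →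
      ∀ f : T, f ≠ q 0 → m f f = f → m e f = f → m f e = f → f = e := by
    intro e he0 hee f hf0 hff hef hfe
    obtain ⟨γ, hγ0, hγ, rfl⟩ := hidem e he0 hee
    obtain ⟨δ, hδ0, hδ, rfl⟩ := hidem f hf0 hff
    rw [hmcoe] at hef hfe
    exact congrArg q (hprim γ hγ0 hγ δ hδ0 hδ (hqinj hef) (hqinj hfe))
  -- compactness of T
  have hcompact : CompactSpace T := by
    have h1 : TotallyBounded (Set.univ : Set S) :=
      Stmt10.totB inv hinvc hinv hprim hcc
    have h2 : TotallyBounded (Set.range q) := by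
      have := h1.image (Completion.uniformContinuous_coe S)
      rwa [Set.image_univ] at this
    have h3 : TotallyBounded (Set.univ : Set T) := by
      rw [← hqdense.closure_range]
      exact h2.closure
    rw [← isCompact_univ_iff]
    exact isCompact_iff_totallyBounded_isComplete.mpr
      ⟨h3, completeSpace_iff_isComplete_univ.mp inferInstance⟩
  obtain ⟨a₀, b₀, hab₀⟩ := exists_pair_ne S
  letI mulT : Mul T := ⟨m⟩
  letI sgT : Semigroup T := { mul_assoc := hassoc }
  letI mT : SemigroupWithZero T :=
    { sgT with zero := q 0, zero_mul := hzm, mul_zero := hmz }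
  refine ⟨T, inferInstance, mT,
    ivT, inferInstance, hcompact, ⟨hmc⟩, hivc, ⟨hid1, hid2, huniq⟩,
    ⟨⟨q a₀, q b₀, fun h => hab₀ (hqinj h)⟩⟩, hprimT, q,
    (Completion.isUniformEmbedding_coe S).isEmbedding, hqdense,
    fun a b => (hmcoe a b).symm, rfl, fun a => (hivcoe a).symm⟩
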